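/- Let t be a fixed positive integer, and let H be a finite bipartite simple graph whose two parts L and V each have cardinality t. If for every vertex v ∈ V and every vertex u ∈ L the degrees satisfy d_H(v) + d_H(u) ≥ t, then H has a perfect matching. -/

import Mathlib

/-- Lemma 3.1: if `H` is a bipartite graph with parts `L` and `V`, each of cardinality
`t > 0`, such that `d_H(v) + d_H(u) ≥ t` for every `v ∈ V` and `u ∈ L`, then `H` has a
perfect matching. -/
theorem exists_perfect_matching_of_degree_sum
    {W : Type*} [Fintype W] [DecidableEq W] (H : SimpleGraph W) [DecidableRel H.Adj]
    (L V : Finset W) (hdisj : Disjoint L V) (hunion : L ∪ V = Finset.univ)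
    (hbip : ∀ u v : W, H.Adj u v → (u ∈ L ∧ v ∈ V) ∨ (u ∈ V ∧ v ∈ L))
    (t : ℕ) (ht : 0 < t) (hL : L.card = t) (hV : V.card = t)
    (hdeg : ∀ v ∈ V, ∀ u ∈ L, t ≤ H.degree v + H.degree u) :
    ∃ M : H.Subgraph, M.IsPerfectMatching := by
  -- neighbors of a vertex in L all lie in V, and vice versa
  have hnbrV : ∀ u ∈ L, H.neighborFinset u ⊆ V := by
    intro u hu x hx
    rw [SimpleGraph.mem_neighborFinset] at hx
    rcases hbip u x hx with ⟨_, h2⟩ | ⟨h1, _⟩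
    · exact h2
    · exact absurd hu (Finset.disjoint_right.mp hdisj h1)
  have hnbrL : ∀ v ∈ V, H.neighborFinset v ⊆ L := by
    intro v hv x hx
    rw [SimpleGraph.mem_neighborFinset] at hx
    rcases hbip v x hx with ⟨h1, _⟩ | ⟨_, h2⟩
    · exact absurd hv (Finset.disjoint_left.mp hdisj h1)
    · exact h2
  -- Hall's condition for the family of neighborhoods of vertices of L
  have hall : ∀ s : Finset ↥L, s.card ≤ (s.biUnion fun u => H.neighborFinset u.1).card := by
    intro s
    set N := s.biUnion fun u => H.neighborFinset u.1 with hN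
    have hNV : N ⊆ V := by
      intro x hx
      rw [hN, Finset.mem_biUnion] at hx
      obtain ⟨u, _, hx⟩ := hx
      exact hnbrV u.1 u.2 hx
    have hscard : (s.image (fun u : ↥L => u.1)).card = s.card :=
      Finset.card_image_of_injective s Subtype.val_injective
    have hsub : s.image (fun u : ↥L => u.1) ⊆ L := by
      intro x hx
      rw [Finset.mem_image] at hx
      obtain ⟨u, _, rfl⟩ := hx
      exact u.2
    have hst : s.card ≤ t := by
      rw [← hscard, ← hL]; exact Finset.card_le_card hsub
    rcases s.eq_empty_or_nonempty with rfl | ⟨u, hu⟩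
    · simp
    by_cases hNeq : N = V
    · rw [hNeq, hV]; exact hst
    · -- there is v ∈ V \ N
      obtain ⟨v, hvV, hvN⟩ := Finset.exists_of_ssubset (hNV.ssubset_of_ne hNeq)
      -- neighbors of v avoid the image of s
      have hvnbr : H.neighborFinset v ⊆ L \ s.image (fun u : ↥L => u.1) := by
        intro x hx
        rw [Finset.mem_sdiff]
        refine ⟨hnbrL v hvV hx, ?_⟩
        intro hxs
        rw [Finset.mem_image] at hxs
        obtain ⟨u', hu', rfl⟩ := hxs
        apply hvN
        rw [hN, Finset.mem_biUnion]
        rw [SimpleGraph.mem_neighborFinset] at hx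
        exact ⟨u', hu', (SimpleGraph.mem_neighborFinset _ _ _).mpr hx.symm⟩
      have hdv : H.degree v ≤ t - s.card := by
        rw [← SimpleGraph.card_neighborFinset_eq_degree]
        calc (H.neighborFinset v).card ≤ (L \ s.image (fun u : ↥L => u.1)).card :=
              Finset.card_le_card hvnbr
          _ = t - s.card := by rw [Finset.card_sdiff_of_subset hsub, hL, hscard]
      have hdu : H.degree u.1 ≤ N.card := by
        rw [← SimpleGraph.card_neighborFinset_eq_degree]
        apply Finset.card_le_card
        intro x hx
        rw [hN, Finset.mem_biUnion]
        exact ⟨u, hu, hx⟩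
      have := hdeg v hvV u.1 u.2
      omega
  obtain ⟨f, hfinj, hfadj⟩ := (Finset.all_card_le_biUnion_card_iff_exists_injective
    (fun u : ↥L => H.neighborFinset u.1)).mp hall
  simp only [SimpleGraph.mem_neighborFinset] at hfadj
  -- f maps into V
  have hfV : ∀ u : ↥L, f u ∈ V := fun u => hnbrV u.1 u.2
    (by rw [SimpleGraph.mem_neighborFinset]; exact hfadj u)
  -- f is surjective onto V
  have hfsurj : ∀ v ∈ V, ∃ u : ↥L, f u = v := by
    intro v hv
    have himg : Finset.univ.image f ⊆ V := by
      intro x hx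
      rw [Finset.mem_image] at hx
      obtain ⟨u, _, rfl⟩ := hx
      exact hfV u
    have hcard : (Finset.univ.image f).card = V.card := by
      rw [Finset.card_image_of_injective _ hfinj, Finset.card_univ, Fintype.card_coe, hL, hV]
    have := Finset.eq_of_subset_of_card_le himg (le_of_eq hcard.symm)
    rw [← this, Finset.mem_image] at hv
    obtain ⟨u, _, rfl⟩ := hv
    exact ⟨u, rfl⟩
  -- every vertex is in L or V, not both
  have hLV : ∀ w : W, w ∈ L ∨ w ∈ V := by
    intro w
    have : w ∈ L ∪ V := by rw [hunion]; exact Finset.mem_univ w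
    exact Finset.mem_union.mp this
  -- build the matching subgraph
  refine ⟨⟨Set.univ, fun a b => ∃ u : ↥L, (a = u.1 ∧ b = f u) ∨ (b = u.1 ∧ a = f u),
    ?_, fun _ => trivial, ?_⟩, ?_⟩
  · intro a b hab
    obtain ⟨u, ⟨rfl, rfl⟩ | ⟨rfl, rfl⟩⟩ := hab
    exacts [hfadj u, (hfadj u).symm]
  · refine ⟨fun a b hab => ?_⟩
    obtain ⟨u, h⟩ := hab
    exact ⟨u, Or.symm h⟩
  · rw [SimpleGraph.Subgraph.isPerfectMatching_iff]
    intro w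
    rcases hLV w with hw | hw
    · refine ⟨f ⟨w, hw⟩, ⟨⟨w, hw⟩, Or.inl ⟨rfl, rfl⟩⟩, ?_⟩
      rintro y ⟨u, ⟨h1, rfl⟩ | ⟨rfl, h2⟩⟩
      · subst h1; rfl
      · exact absurd hw (Finset.disjoint_right.mp hdisj (h2 ▸ hfV u))
    · obtain ⟨u, rfl⟩ := hfsurj w hw
      refine ⟨u.1, ⟨u, Or.inr ⟨rfl, rfl⟩⟩, ?_⟩
      rintro y ⟨u', ⟨h1, h2⟩ | ⟨rfl, h2⟩⟩
      · exact absurd hw (Finset.disjoint_left.mp hdisj (h1 ▸ u'.2))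
      · rw [show u' = u from hfinj h2.symm]
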